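/- If C = e_1 C_1 ⊕ e_2 C_2 ⊕ e_3 C_3 is a cyclic code of length n over R, where C_i has generator polynomial g_i(x) over F = F_{p^k}, then C = <e_1 g_1(x), e_2 g_2(x), e_3 g_3(x)> as an ideal of R[x]/(x^n - 1), and |C| = (p^k)^{3n - deg g_1 - deg g_2 - deg g_3}. -/

import Mathlib

open Polynomial

section MyAux
open AdjoinRoot
variable {K : Type*} [Field K]

noncomputable def myE : Fin 3 → K × K × K := ![(1,0,0),(0,1,0),(0,0,1)]

noncomputable def myPr : Fin 3 → (K × K × K →+* K) :=
  ![RingHom.fst K (K × K),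
    (RingHom.fst K K).comp (RingHom.snd K (K × K)),
    (RingHom.snd K K).comp (RingHom.snd K (K × K))]

lemma myPr_e (i j : Fin 3) : myPr j (myE i : K × K × K) = if i = j then 1 else 0 := by
  fin_cases i <;> fin_cases j <;> simp [myPr, myE]

lemma myPr_alg (j : Fin 3) (x : K) : myPr j (algebraMap K (K × K × K) x) = x := by
  fin_cases j <;> rfl

noncomputable def myPj (n : ℕ) (j : Fin 3) :
    AdjoinRoot ((X : Polynomial (K × K × K)) ^ n - 1) →+* AdjoinRoot ((X : K[X]) ^ n - 1) :=
  AdjoinRoot.lift ((AdjoinRoot.of _).comp (myPr j)) (AdjoinRoot.root _)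
    (by
      have := AdjoinRoot.mk_self (f := (X : K[X]) ^ n - 1)
      simp only [map_sub, map_pow, map_one, mk_X] at this
      simp [this])

lemma myPj_term (n : ℕ) (j i : Fin 3) (b : K[X]) :
    myPj n j ((myE i : K × K × K) • AdjoinRoot.mk _
        (b.map (algebraMap K (K × K × K)))) =
      (if i = j then 1 else 0) * AdjoinRoot.mk _ b := by
  have hsmul : (myE i : K × K × K) • AdjoinRoot.mk ((X : Polynomial (K × K × K)) ^ n - 1)
      (b.map (algebraMap K (K × K × K))) =
      AdjoinRoot.of _ (myE i) * AdjoinRoot.mk _ (b.map (algebraMap K (K × K × K))) :=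
    Algebra.smul_def _ _
  rw [hsmul, map_mul]
  have h2 : myPj n j (AdjoinRoot.mk _ (b.map (algebraMap K (K × K × K)))) = AdjoinRoot.mk _ b := by
    rw [myPj, AdjoinRoot.lift_mk, Polynomial.eval₂_map]
    have : ((AdjoinRoot.of ((X : K[X]) ^ n - 1)).comp (myPr j)).comp (algebraMap K (K × K × K))
        = AdjoinRoot.of _ := by
      ext x; simp only [RingHom.comp_apply]; exact congrArg _ (myPr_alg j x)
    rw [this, ← AdjoinRoot.algebraMap_eq, ← Polynomial.aeval_def, AdjoinRoot.aeval_eq]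
  rw [h2]
  have h1' : myPj n j (AdjoinRoot.of _ (myE i : K × K × K)) = AdjoinRoot.of _ (myPr j (myE i)) := by
    rw [myPj, AdjoinRoot.lift_of]; rfl
  rw [h1', myPr_e]
  split <;> simp

lemma myMkInj {n : ℕ} (hn : 0 < n) {b b' : K[X]} (hb : b.degree < n) (hb' : b'.degree < n)
    (h : AdjoinRoot.mk ((X : K[X]) ^ n - 1) b = AdjoinRoot.mk _ b') : b = b' := by
  rw [AdjoinRoot.mk_eq_mk] at h
  have hdeg : ((X : K[X]) ^ n - 1).degree = n := by
    have := Polynomial.degree_X_pow_sub_C hn (1 : K)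
    rwa [Polynomial.C_1] at this
  have : b - b' = 0 := by
    refine Polynomial.eq_zero_of_dvd_of_degree_lt h ?_
    rw [hdeg]
    exact lt_of_le_of_lt (Polynomial.degree_sub_le _ _) (max_lt hb hb')
  exact sub_eq_zero.mp this

lemma myCardDegLT (m : ℕ) :
    Nat.card (Polynomial.degreeLT K m) = Nat.card K ^ m := by
  rw [Nat.card_congr (Polynomial.degreeLTEquiv K m).toEquiv]
  simp [Nat.card_pi]
end MyAux

/-- If `C = e1 C1 ⊕ e2 C2 ⊕ e3 C3` is a cyclic code of length `n` over
`R = e1 F ⊕ e2 F ⊕ e3 F` (realized as `F × F × F`, `F = F_{p^k}`), i.e. an ideal of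
`R[x]/(x^n - 1)` whose elements are exactly the `e1 a1(x) + e2 a2(x) + e3 a3(x)` with
`a i` a multiple of the generator polynomial `g i` of `C i`, then
`C = <e1 g1(x), e2 g2(x), e3 g3(x)>` and `|C| = (p^k)^{3n - deg g1 - deg g2 - deg g3}`. -/
theorem stmt16 (p k n : ℕ) [Fact p.Prime] (hk : 0 < k) (hn : 0 < n)
    (g : Fin 3 → Polynomial (GaloisField p k))
    (hmonic : ∀ i, (g i).Monic) (hdvd : ∀ i, g i ∣ X ^ n - 1)
    (C : Ideal (AdjoinRoot
      ((X : Polynomial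
        (GaloisField p k × GaloisField p k × GaloisField p k)) ^ n - 1)))
    (hC : ∀ x, x ∈ C ↔ ∃ a : Fin 3 → Polynomial (GaloisField p k),
      x = ∑ i, ![((1 : GaloisField p k), (0 : GaloisField p k), (0 : GaloisField p k)),
                 (0, 1, 0), (0, 0, 1)] i •
        AdjoinRoot.mk _ ((g i * a i).map (algebraMap (GaloisField p k)
          (GaloisField p k × GaloisField p k × GaloisField p k)))) :
    C = Ideal.span
        (Set.range fun i : Fin 3 =>
          ![((1 : GaloisField p k), (0 : GaloisField p k), (0 : GaloisField p k)),
            (0, 1, 0), (0, 0, 1)] i •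
            AdjoinRoot.mk _ ((g i).map (algebraMap (GaloisField p k)
              (GaloisField p k × GaloisField p k × GaloisField p k)))) ∧
      Nat.card C =
        p ^ (k * (3 * n - (g 0).natDegree - (g 1).natDegree - (g 2).natDegree)) := by
  classical
  have hEmat : (![((1 : GaloisField p k), (0 : GaloisField p k), (0 : GaloisField p k)),
      (0, 1, 0), (0, 0, 1)] :
      Fin 3 → GaloisField p k × GaloisField p k × GaloisField p k) = myE := rfl
  simp only [hEmat] at hC ⊢
  have hXn : ((X : (GaloisField p k)[X]) ^ n - 1).Monic := by
    have := Polynomial.monic_X_pow_sub_C (1 : GaloisField p k) hn.ne'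
    rwa [Polynomial.C_1] at this
  choose h hh using hdvd
  have hhmonic : ∀ i, (h i).Monic := fun i =>
    (hmonic i).of_mul_monic_left (hh i ▸ hXn : ((g i) * h i).Monic)
  have hdn : ∀ i, (g i).natDegree + (h i).natDegree = n := by
    intro i
    have : ((g i) * h i).natDegree = n := by
      rw [← hh i]
      have := Polynomial.natDegree_X_pow_sub_C (n := n) (r := (1 : GaloisField p k))
      rwa [Polynomial.C_1] at this
    rwa [(hmonic i).natDegree_mul (hhmonic i)] at this
  have hdle : ∀ i, (g i).natDegree ≤ n := fun i => le_of_add_le_left (hdn i).le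
  have hdegmul : ∀ i (a : (GaloisField p k)[X]),
      a ∈ Polynomial.degreeLT (GaloisField p k) (n - (g i).natDegree) →
      ((g i) * a).degree < (n : WithBot ℕ) := by
    intro i a ha
    rw [Polynomial.mem_degreeLT] at ha
    rcases eq_or_ne a 0 with rfl | ha0
    · simpa using (by exact_mod_cast WithBot.bot_lt_coe n : (⊥ : WithBot ℕ) < n)
    · have hna : a.natDegree < n - (g i).natDegree :=
        (Polynomial.natDegree_lt_iff_degree_lt ha0).mpr ha
      rw [Polynomial.degree_mul, Polynomial.degree_eq_natDegree (hmonic i).ne_zero,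
        Polynomial.degree_eq_natDegree ha0]
      rw [← Nat.cast_add, Nat.cast_lt]
      have := hdle i
      omega
  constructor
  · ext x
    constructor
    · intro hx
      obtain ⟨a, rfl⟩ := (hC x).1 hx
      refine Ideal.sum_mem _ fun i _ => ?_
      have hterm : (myE i : GaloisField p k × GaloisField p k × GaloisField p k) •
            AdjoinRoot.mk _ ((g i * a i).map (algebraMap (GaloisField p k)
              (GaloisField p k × GaloisField p k × GaloisField p k)))
          = ((myE i : GaloisField p k × GaloisField p k × GaloisField p k) •
              AdjoinRoot.mk _ ((g i).map (algebraMap (GaloisField p k)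
                (GaloisField p k × GaloisField p k × GaloisField p k)))) *
              AdjoinRoot.mk ((X : Polynomial (GaloisField p k × GaloisField p k ×
                GaloisField p k)) ^ n - 1) ((a i).map (algebraMap (GaloisField p k)
                (GaloisField p k × GaloisField p k × GaloisField p k))) := by
        rw [Polynomial.map_mul, map_mul, smul_mul_assoc]
      rw [hterm]
      exact Ideal.mul_mem_right _ _ (Ideal.subset_span ⟨i, rfl⟩)
    · intro hx
      refine Ideal.span_le.mpr ?_ hx
      rintro y ⟨i, rfl⟩
      rw [SetLike.mem_coe, hC]
      refine ⟨fun j => if j = i then 1 else 0, ?_⟩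
      rw [Finset.sum_eq_single i (fun j _ hj => by simp [hj]) (by simp)]
      simp
  · have hhdeg : ∀ i, (h i).natDegree = n - (g i).natDegree := fun i => by
      have := hdn i; omega
    let D := (i : Fin 3) → ↥(Polynomial.degreeLT (GaloisField p k) (n - (g i).natDegree))
    let Ψ : D → ↥C := fun a =>
      ⟨∑ i, (myE i : GaloisField p k × GaloisField p k × GaloisField p k) •
          AdjoinRoot.mk _ ((g i * (a i : (GaloisField p k)[X])).map
            (algebraMap (GaloisField p k)
              (GaloisField p k × GaloisField p k × GaloisField p k))),
        (hC _).2 ⟨fun i => (a i : (GaloisField p k)[X]), rfl⟩⟩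
    have hbij : Function.Bijective Ψ := by
      constructor
      · intro a a' hEq
        have hsum : ∀ j, AdjoinRoot.mk ((X : (GaloisField p k)[X]) ^ n - 1)
              (g j * (a j : (GaloisField p k)[X]))
            = AdjoinRoot.mk _ (g j * (a' j : (GaloisField p k)[X])) := by
          intro j
          have hval := congrArg (fun z : ↥C => myPj n j z.1) hEq
          simp only [Ψ, map_sum, myPj_term, ite_mul, one_mul, zero_mul,
            Finset.sum_ite_eq', Finset.mem_univ, if_true] at hval
          exact hval
        funext j
        have hb := hdegmul j _ (a j).2
        have hb' := hdegmul j _ (a' j).2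
        have := myMkInj hn hb hb' (hsum j)
        exact Subtype.ext (mul_left_cancel₀ (hmonic j).ne_zero this)
      · rintro ⟨x, hx⟩
        obtain ⟨a, rfl⟩ := (hC x).1 hx
        have hmem : ∀ i, a i %ₘ h i ∈
            Polynomial.degreeLT (GaloisField p k) (n - (g i).natDegree) := by
          intro i
          rw [Polynomial.mem_degreeLT, ← hhdeg i,
            ← Polynomial.degree_eq_natDegree (hhmonic i).ne_zero]
          exact Polynomial.degree_modByMonic_lt _ (hhmonic i)
        refine ⟨fun i => ⟨a i %ₘ h i, hmem i⟩, ?_⟩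
        apply Subtype.ext
        show (∑ i, (myE i : GaloisField p k × GaloisField p k × GaloisField p k) •
            AdjoinRoot.mk _ ((g i * (a i %ₘ h i)).map (algebraMap (GaloisField p k)
              (GaloisField p k × GaloisField p k × GaloisField p k))))
          = ∑ i, (myE i : GaloisField p k × GaloisField p k × GaloisField p k) •
            AdjoinRoot.mk _ ((g i * a i).map (algebraMap (GaloisField p k)
              (GaloisField p k × GaloisField p k × GaloisField p k)))
        refine Finset.sum_congr rfl fun i _ => ?_
        congr 1
        rw [AdjoinRoot.mk_eq_mk]
        have inner : g i * (a i %ₘ h i) - g i * a i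
            = ((X : (GaloisField p k)[X]) ^ n - 1) * (-(a i /ₘ h i)) := by
          have h1 := Polynomial.modByMonic_add_div (a i) (h i)
          rw [hh i]
          linear_combination (g i) * h1
        refine ⟨-((a i /ₘ h i).map (algebraMap (GaloisField p k)
          (GaloisField p k × GaloisField p k × GaloisField p k))), ?_⟩
        rw [← Polynomial.map_sub, inner, Polynomial.map_mul]
        simp
    have hcard : Nat.card (↥C) = Nat.card D := (Nat.card_eq_of_bijective Ψ hbij).symm
    rw [hcard]
    have hD : Nat.card D = ∏ i, Nat.card
        (↥(Polynomial.degreeLT (GaloisField p k) (n - (g i).natDegree))) := Nat.card_pi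
    rw [hD]
    have hcF : Nat.card (GaloisField p k) = p ^ k := GaloisField.card (p := p) (n := k) hk.ne'
    simp only [myCardDegLT, hcF]
    rw [Fin.prod_univ_three, ← pow_mul, ← pow_mul, ← pow_mul, ← pow_add, ← pow_add]
    rw [← Nat.mul_add, ← Nat.mul_add]
    have h0 := hdle 0; have h1 := hdle 1; have h2 := hdle 2
    refine congrArg (p ^ ·) (congrArg (k * ·) ?_)
    omega
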